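/- Let G = (V,E) be a finite simple graph and let M be any matching of G. Then there exists a maximum matching M* of G such that every connected component of the graph (V, M ∪ M*) is either a single edge belonging to M ∩ M*, or an M-augmenting path, i.e. an M-alternating path whose first and last edges lie in M* and whose two endpoints are not covered by M (such a path with m edges of M has m+1 edges of M*). -/

import Mathlib

namespace MinGreedy

noncomputable section

open SimpleGraph

/-- The degree of a vertex `x` in the graph `H`. -/
def deg {V : Type} (H : SimpleGraph V) (x : V) : ℕ :=
  (H.neighborSet x).ncard

/-- `M` is a matching of `G`, given as a set of pairwise disjoint edges of `G`. -/
def IsMatchingSet {V : Type} (G : SimpleGraph V) (M : Set (Sym2 V)) : Prop :=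
  M ⊆ G.edgeSet ∧ ∀ e ∈ M, ∀ f ∈ M, e ≠ f → ∀ x : V, x ∈ e → x ∉ f

/-- `M` is a maximum matching of `G`. -/
def IsMaxMatchingSet {V : Type} (G : SimpleGraph V) (M : Set (Sym2 V)) : Prop :=
  IsMatchingSet G M ∧ ∀ N : Set (Sym2 V), IsMatchingSet G N → N.ncard ≤ M.ncard

/-- `ν G`, the maximum size of a matching of `G`. -/
def nu {V : Type} (G : SimpleGraph V) : ℕ :=
  sSup {n | ∃ M : Set (Sym2 V), IsMatchingSet G M ∧ M.ncard = n}

/-- `G` has maximum degree at most `Δ`. -/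
def maxDegLE {V : Type} (G : SimpleGraph V) (Δ : ℕ) : Prop :=
  ∀ x : V, deg G x ≤ Δ

/-- An execution of a greedy matching algorithm on `G`: in step `i` (`0 ≤ i < k`) the
edge `{sel i, oth i}` of `Gs i` is picked with selected vertex `sel i`, and `Gs (i+1)`
is obtained from `Gs i` by deleting all edges incident with `sel i` or `oth i`;
at the end `Gs k` has no edges. -/
structure GreedyExec (V : Type) (G : SimpleGraph V) where
  k : ℕ
  Gs : ℕ → SimpleGraph V
  sel : ℕ → V
  oth : ℕ → V
  init : Gs 0 = G
  adj : ∀ i < k, (Gs i).Adj (sel i) (oth i)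
  step : ∀ i < k, Gs (i + 1) =
    SimpleGraph.fromEdgeSet {e | e ∈ (Gs i).edgeSet ∧ sel i ∉ e ∧ oth i ∉ e}
  final : (Gs k).edgeSet = ∅

/-- The output matching `M = {e_1, …, e_k}` of an execution. -/
def GreedyExec.M {V : Type} {G : SimpleGraph V} (E : GreedyExec V G) : Set (Sym2 V) :=
  {e | ∃ i < E.k, e = s(E.sel i, E.oth i)}

/-- The execution is a MinGreedy execution: in each step the selected vertex has
minimum positive degree in the current graph. -/
def GreedyExec.IsMinGreedy {V : Type} {G : SimpleGraph V} (E : GreedyExec V G) : Prop :=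
  ∀ i < E.k, ∀ x : V, 0 < deg (E.Gs i) x → deg (E.Gs i) (E.sel i) ≤ deg (E.Gs i) x

/-- The execution is a 1-2-MinGreedy execution: whenever the current graph has a vertex of
degree 1 or 2, the selected vertex has minimum positive degree in the current graph. -/
def GreedyExec.Is12MinGreedy {V : Type} {G : SimpleGraph V} (E : GreedyExec V G) : Prop :=
  ∀ i < E.k, (∃ x : V, deg (E.Gs i) x = 1 ∨ deg (E.Gs i) x = 2) →
    ∀ x : V, 0 < deg (E.Gs i) x → deg (E.Gs i) (E.sel i) ≤ deg (E.Gs i) x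

/-- `p 0, p 1, …, p (2m+1)` is an `M`-augmenting path: an `M`-alternating path whose
first and last edges lie in `Mopt` and whose two endpoints `p 0` and `p (2m+1)` are
not covered by `M`; it has `m` edges of `M` and `m+1` edges of `Mopt`. -/
def IsAugPath {V : Type} (M Mopt : Set (Sym2 V)) (m : ℕ) (p : ℕ → V) : Prop :=
  (∀ i ≤ 2 * m + 1, ∀ j ≤ 2 * m + 1, p i = p j → i = j) ∧
  (∀ j ≤ 2 * m, (j % 2 = 0 → s(p j, p (j + 1)) ∈ Mopt) ∧
                (j % 2 = 1 → s(p j, p (j + 1)) ∈ M)) ∧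
  (∀ e ∈ M, p 0 ∉ e ∧ p (2 * m + 1) ∉ e)

/-- The vertex set of the path `p 0, …, p (2m+1)`. -/
def pathSupp {V : Type} (m : ℕ) (p : ℕ → V) : Set V := p '' {j | j ≤ 2 * m + 1}

/-- `w` is an endpoint of an `M`-augmenting path of the graph `(V, M ∪ Mopt)`. -/
def IsPathEndpoint {V : Type} (M Mopt : Set (Sym2 V)) (w : V) : Prop :=
  ∃ m p, IsAugPath M Mopt m p ∧ (w = p 0 ∨ w = p (2 * m + 1))

/-- `S` is the vertex set of a singleton component: a single edge of `M ∩ Mopt`. -/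
def IsSingletonComp {V : Type} (M Mopt : Set (Sym2 V)) (S : Set V) : Prop :=
  ∃ x y : V, x ≠ y ∧ s(x, y) ∈ M ∧ s(x, y) ∈ Mopt ∧ S = ({x, y} : Set V)

/-- `Mopt` is a maximum matching of `G` in normal form with respect to `M`: every
(nontrivial) connected component of the graph `(V, M ∪ Mopt)` is a singleton
(a single edge of `M ∩ Mopt`) or an `M`-augmenting path. -/
def NormalForm {V : Type} (G : SimpleGraph V) (M Mopt : Set (Sym2 V)) : Prop :=
  IsMaxMatchingSet G Mopt ∧
  ∀ C : (SimpleGraph.fromEdgeSet (M ∪ Mopt)).ConnectedComponent,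
    2 ≤ C.supp.ncard →
    IsSingletonComp M Mopt C.supp ∨
    ∃ m p, IsAugPath M Mopt m p ∧ C.supp = pathSupp m p

/-- `{x, y}` is an edge of `F = E ∖ (M ∪ Mopt)`. -/
def FEdge {V : Type} (G : SimpleGraph V) (M Mopt : Set (Sym2 V)) (x y : V) : Prop :=
  s(x, y) ∈ G.edgeSet ∧ s(x, y) ∉ M ∧ s(x, y) ∉ Mopt

/-- The number of `F`-edges incident with `x`. -/
def Fdeg {V : Type} (G : SimpleGraph V) (M Mopt : Set (Sym2 V)) (x : V) : ℕ :=
  {e : Sym2 V | e ∈ G.edgeSet ∧ e ∉ M ∧ e ∉ Mopt ∧ x ∈ e}.ncard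

/-- `x` is matched at step `i` of the execution, i.e. `x ∈ e_i`. -/
def matchedAt {V : Type} {G : SimpleGraph V} (E : GreedyExec V G) (i : ℕ) (x : V) : Prop :=
  i < E.k ∧ (x = E.sel i ∨ x = E.oth i)

/-- The `F`-edge `{v, w}` is a transfer from `v` to `w` arising at step `i`: `w` is an
endpoint of an `M`-augmenting path, `v` is matched at step `i` and the degree of `w`
in the graph after step `i` is at most 1. -/
def transferAt {V : Type} {G : SimpleGraph V} (E : GreedyExec V G)
    (M Mopt : Set (Sym2 V)) (i : ℕ) (v w : V) : Prop :=
  FEdge G M Mopt v w ∧ IsPathEndpoint M Mopt w ∧ matchedAt E i v ∧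
  deg (E.Gs (i + 1)) w ≤ 1

/-- The edge `{v, w}` is a transfer from `v` to `w`. -/
def IsTransfer {V : Type} {G : SimpleGraph V} (E : GreedyExec V G)
    (M Mopt : Set (Sym2 V)) (v w : V) : Prop :=
  ∃ i, transferAt E M Mopt i v w

/-- `(v, w)` is an uncanceled transfer arising at step `i`: it is a transfer arising at
step `i` and it is not the case that (`w` has degree exactly 1 before step `i` with its
unique incident edge being `{v, w}`, and `w` is the target of at least two uncanceled
transfers arising at steps before `i`). -/
def uncanceledAt {V : Type} {G : SimpleGraph V} (E : GreedyExec V G)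
    (M Mopt : Set (Sym2 V)) (i : ℕ) : V → V → Prop :=
  Nat.strongRecOn (motive := fun _ => V → V → Prop) i (fun i ih v w =>
    transferAt E M Mopt i v w ∧
    ¬(deg (E.Gs i) w = 1 ∧ (E.Gs i).Adj v w ∧
      ∃ (j₁ : ℕ) (h₁ : j₁ < i) (v₁ : V) (j₂ : ℕ) (h₂ : j₂ < i) (v₂ : V),
        ih j₁ h₁ v₁ w ∧ ih j₂ h₂ v₂ w ∧ (j₁, v₁) ≠ (j₂, v₂)))

/-- `(v, w)` is an uncanceled transfer. -/
def IsUncanceledTransfer {V : Type} {G : SimpleGraph V} (E : GreedyExec V G)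
    (M Mopt : Set (Sym2 V)) (v w : V) : Prop :=
  ∃ i, uncanceledAt E M Mopt i v w

/-- `(v, w)` is a canceled transfer. -/
def IsCanceledTransfer {V : Type} {G : SimpleGraph V} (E : GreedyExec V G)
    (M Mopt : Set (Sym2 V)) (v w : V) : Prop :=
  IsTransfer E M Mopt v w ∧ ¬IsUncanceledTransfer E M Mopt v w

/-- `d_X`: the number of transfers whose source lies in the vertex set `X`. -/
def debits {V : Type} {G : SimpleGraph V} (E : GreedyExec V G)
    (M Mopt : Set (Sym2 V)) (X : Set V) : ℕ :=
  {q : V × V | IsTransfer E M Mopt q.1 q.2 ∧ q.1 ∈ X}.ncard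

/-- `c_X`: the number of transfers whose target lies in the vertex set `X`. -/
def credits {V : Type} {G : SimpleGraph V} (E : GreedyExec V G)
    (M Mopt : Set (Sym2 V)) (X : Set V) : ℕ :=
  {q : V × V | IsTransfer E M Mopt q.1 q.2 ∧ q.2 ∈ X}.ncard

/-- `i` is the creation step of the component with vertex set `X`: the step in which the
first edge of `M` lying in `X` is picked. -/
def creationStep {V : Type} {G : SimpleGraph V} (E : GreedyExec V G)
    (X : Set V) (i : ℕ) : Prop :=
  i < E.k ∧ E.sel i ∈ X ∧ E.oth i ∈ X ∧ ∀ j < i, ¬(E.sel j ∈ X ∧ E.oth j ∈ X)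

/-- A degree-1 endpoint exists after the creation step `i`: some transfer with source
`sel i` or `oth i` targets an endpoint `w` of degree exactly 1 after step `i`. -/
def Deg1EndpointAfter {V : Type} {G : SimpleGraph V} (E : GreedyExec V G)
    (M Mopt : Set (Sym2 V)) (i : ℕ) : Prop :=
  ∃ v w : V, (v = E.sel i ∨ v = E.oth i) ∧ transferAt E M Mopt i v w ∧
    deg (E.Gs (i + 1)) w = 1
section Aux

variable {V : Type}

lemma matching_ne {G : SimpleGraph V} {A : Set (Sym2 V)} (hA : IsMatchingSet G A)
    {x y : V} (h : s(x,y) ∈ A) : x ≠ y :=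
  G.ne_of_adj (G.mem_edgeSet.mp (hA.1 h))

lemma matching_eq {G : SimpleGraph V} {A : Set (Sym2 V)} (hA : IsMatchingSet G A)
    {e f : Sym2 V} (he : e ∈ A) (hf : f ∈ A) {x : V} (hxe : x ∈ e) (hxf : x ∈ f) : e = f := by
  by_contra hne
  exact hA.2 e he f hf hne x hxe hxf

lemma matching_unique {G : SimpleGraph V} {A : Set (Sym2 V)} (hA : IsMatchingSet G A)
    {x y z : V} (h1 : s(x,y) ∈ A) (h2 : s(x,z) ∈ A) : y = z :=
  Sym2.congr_right.mp (matching_eq hA h1 h2 (Sym2.mem_mk_left x y) (Sym2.mem_mk_left x z))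

lemma parity_ncard (n : ℕ) :
    {l | l < n ∧ l % 2 = 0}.ncard = (n+1)/2 ∧ {l | l < n ∧ l % 2 = 1}.ncard = n/2 := by
  induction n with
  | zero =>
    have h0 : {l | l < 0 ∧ l % 2 = 0} = (∅ : Set ℕ) := by ext l; simp
    have h1 : {l | l < 0 ∧ l % 2 = 1} = (∅ : Set ℕ) := by ext l; simp
    simp [h0, h1]
  | succ n ih =>
    have hfin : ∀ r, {l | l < n ∧ l % 2 = r}.Finite := fun r =>
      (Set.finite_Iio n).subset (fun l hl => hl.1)
    have hmem : ∀ r, n ∉ {l | l < n ∧ l % 2 = r} := by intro r h; exact absurd h.1 (lt_irrefl n)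
    rcases Nat.even_or_odd n with he | ho
    · have h0 : {l | l < n+1 ∧ l % 2 = 0} = insert n {l | l < n ∧ l % 2 = 0} := by
        ext l; simp only [Set.mem_setOf_eq, Set.mem_insert_iff]
        constructor
        · rintro ⟨h1, h2⟩
          rcases Nat.lt_succ_iff_lt_or_eq.mp h1 with h | h
          · exact Or.inr ⟨h, h2⟩
          · exact Or.inl h
        · rintro (h | ⟨h1, h2⟩)
          · subst h; exact ⟨Nat.lt_succ_self _, Nat.even_iff.mp he⟩
          · exact ⟨Nat.lt_succ_of_lt h1, h2⟩
      have h1 : {l | l < n+1 ∧ l % 2 = 1} = {l | l < n ∧ l % 2 = 1} := by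
        ext l; simp only [Set.mem_setOf_eq]
        constructor
        · rintro ⟨ha, hb⟩
          rcases Nat.lt_succ_iff_lt_or_eq.mp ha with h | rfl
          · exact ⟨h, hb⟩
          · exfalso; have := Nat.even_iff.mp he; omega
        · rintro ⟨ha, hb⟩; exact ⟨Nat.lt_succ_of_lt ha, hb⟩
      rw [h0, h1, Set.ncard_insert_of_notMem (hmem 0) (hfin 0)]
      have hne := Nat.even_iff.mp he
      omega
    · have h0 : {l | l < n+1 ∧ l % 2 = 0} = {l | l < n ∧ l % 2 = 0} := by
        ext l; simp only [Set.mem_setOf_eq]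
        constructor
        · rintro ⟨ha, hb⟩
          rcases Nat.lt_succ_iff_lt_or_eq.mp ha with h | rfl
          · exact ⟨h, hb⟩
          · exfalso; have := Nat.odd_iff.mp ho; omega
        · rintro ⟨ha, hb⟩; exact ⟨Nat.lt_succ_of_lt ha, hb⟩
      have h1 : {l | l < n+1 ∧ l % 2 = 1} = insert n {l | l < n ∧ l % 2 = 1} := by
        ext l; simp only [Set.mem_setOf_eq, Set.mem_insert_iff]
        constructor
        · rintro ⟨ha, hb⟩
          rcases Nat.lt_succ_iff_lt_or_eq.mp ha with h | h
          · exact Or.inr ⟨h, hb⟩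
          · exact Or.inl h
        · rintro (h | ⟨ha, hb⟩)
          · subst h; exact ⟨Nat.lt_succ_self _, Nat.odd_iff.mp ho⟩
          · exact ⟨Nat.lt_succ_of_lt ha, hb⟩
      rw [h0, h1, Set.ncard_insert_of_notMem (hmem 1) (hfin 1)]
      have hno := Nat.odd_iff.mp ho
      omega

lemma swap_core [Fintype V] {G : SimpleGraph V} {M Mopt : Set (Sym2 V)}
    (hM : IsMatchingSet G M) (hMopt : IsMatchingSet G Mopt)
    (hext : ∀ N, IsMatchingSet G N → N.ncard = Mopt.ncard → (M ∩ N).ncard ≤ (M ∩ Mopt).ncard)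
    (PO PM : Set (Sym2 V)) (hPO : PO ⊆ Mopt) (hPM : PM ⊆ M)
    (hPMO : ∀ e ∈ PM, e ∉ Mopt)
    (hcard : PM.ncard = PO.ncard) (hne : PM.Nonempty)
    (hconf : ∀ e ∈ Mopt, e ∉ PO → ∀ f ∈ PM, ∀ x, x ∈ e → x ∉ f)
    (hMMO : ∀ e ∈ M, e ∈ Mopt → e ∉ PO) : False := by
  set N : Set (Sym2 V) := (Mopt \ PO) ∪ PM with hNdef
  have hNmatch : IsMatchingSet G N := by
    constructor
    · rintro e (he | he)
      · exact hMopt.1 he.1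
      · exact hM.1 (hPM he)
    · rintro e (he | he) f (hf | hf) hef x hxe
      · exact hMopt.2 e he.1 f hf.1 hef x hxe
      · exact hconf e he.1 he.2 f hf x hxe
      · intro hxf; exact hconf f hf.1 hf.2 e he x hxf hxe
      · exact hM.2 e (hPM he) f (hPM hf) hef x hxe
  have hdisj : Disjoint (Mopt \ PO) PM := by
    rw [Set.disjoint_left]; rintro e ⟨he1, _⟩ he2; exact hPMO e he2 he1
  have hPOle : PO.ncard ≤ Mopt.ncard := Set.ncard_le_ncard hPO (Set.toFinite _)
  have hN1 : N.ncard = Mopt.ncard := by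
    rw [hNdef, Set.ncard_union_eq hdisj (Set.toFinite _) (Set.toFinite _),
      Set.ncard_diff hPO (Set.toFinite _)]
    omega
  have hsub : (M ∩ Mopt) ∪ PM ⊆ M ∩ N := by
    rintro e (he | he)
    · exact ⟨he.1, Or.inl ⟨he.2, hMMO e he.1 he.2⟩⟩
    · exact ⟨hPM he, Or.inr he⟩
  have hd2 : Disjoint (M ∩ Mopt) PM := by
    rw [Set.disjoint_left]; rintro e ⟨_, he2⟩ he3; exact hPMO e he3 he2
  have hge : (M ∩ Mopt).ncard + PM.ncard ≤ (M ∩ N).ncard := by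
    rw [← Set.ncard_union_eq hd2 (Set.toFinite _) (Set.toFinite _)]
    exact Set.ncard_le_ncard hsub (Set.toFinite _)
  have hle := hext N hNmatch hN1
  have hpos : 0 < PM.ncard := (Set.ncard_pos (Set.toFinite _)).mpr hne
  omega

lemma mem_form {e : Sym2 V} {x : V} (h : x ∈ e) : ∃ y, e = s(x, y) :=
  Sym2.mem_iff_exists.mp h

lemma swap_path [Fintype V] {G : SimpleGraph V} {M Mopt : Set (Sym2 V)}
    (hM : IsMatchingSet G M) (hMopt : IsMatchingSet G Mopt)
    (hext : ∀ N, IsMatchingSet G N → N.ncard = Mopt.ncard → (M ∩ N).ncard ≤ (M ∩ Mopt).ncard)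
    {s : ℕ} {q : ℕ → V} (hs2 : 2 ≤ s) (hse : s % 2 = 0)
    (hinj : ∀ i ≤ s, ∀ j ≤ s, q i = q j → i = j)
    (hedge : ∀ l < s, (l % 2 = 0 → s(q l, q (l+1)) ∈ Mopt) ∧ (l % 2 = 1 → s(q l, q (l+1)) ∈ M))
    (hNC : ∀ l ≤ s, ∀ e ∈ M, e ∈ Mopt → q l ∉ e)
    (hend : ∀ z, s(q s, z) ∉ Mopt) : False := by
  set f : ℕ → Sym2 V := fun l => s(q l, q (l+1)) with hf
  have hfinj : Set.InjOn f {l | l < s} := by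
    intro a ha b hb h
    rw [hf] at h
    simp only at h
    rcases Sym2.eq_iff.mp h with ⟨h1, _⟩ | ⟨h1, h2⟩
    · exact hinj a (le_of_lt ha) b (le_of_lt hb) h1
    · have ha1 : a = b + 1 := hinj a (le_of_lt ha) (b+1) hb h1
      have hb1 : a + 1 = b := hinj (a+1) ha b (le_of_lt hb) h2
      omega
  set PO : Set (Sym2 V) := f '' {l | l < s ∧ l % 2 = 0} with hPOdef
  set PM : Set (Sym2 V) := f '' {l | l < s ∧ l % 2 = 1} with hPMdef
  have hPO : PO ⊆ Mopt := by
    rintro e ⟨l, ⟨hl, hl2⟩, rfl⟩; exact (hedge l hl).1 hl2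
  have hPM : PM ⊆ M := by
    rintro e ⟨l, ⟨hl, hl2⟩, rfl⟩; exact (hedge l hl).2 hl2
  have hPMO : ∀ e ∈ PM, e ∉ Mopt := by
    rintro e ⟨l, ⟨hl, hl2⟩, rfl⟩ hopt
    exact hNC l (le_of_lt hl) (f l) ((hedge l hl).2 hl2) hopt (Sym2.mem_mk_left _ _)
  have hcard : PM.ncard = PO.ncard := by
    rw [hPOdef, hPMdef, Set.ncard_image_of_injOn (hfinj.mono (fun l hl => hl.1)),
      Set.ncard_image_of_injOn (hfinj.mono (fun l hl => hl.1)),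
      (parity_ncard s).1, (parity_ncard s).2]
    omega
  have hne : PM.Nonempty := ⟨f 1, 1, ⟨by omega, by norm_num⟩, rfl⟩
  have hopt_at : ∀ j ≤ s, ∀ e ∈ Mopt, q j ∈ e → e ∉ PO → False := by
    intro j hj e he hqe hePO
    rcases eq_or_lt_of_le hj with rfl | hjs
    · obtain ⟨z, rfl⟩ := mem_form hqe
      exact hend z he
    · rcases Nat.even_or_odd j with hjev | hjod
      · have h1 : f j ∈ Mopt := (hedge j hjs).1 (Nat.even_iff.mp hjev)
        have h2 : e = f j := matching_eq hMopt he h1 hqe (Sym2.mem_mk_left _ _)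
        exact hePO (h2 ▸ ⟨j, ⟨hjs, Nat.even_iff.mp hjev⟩, rfl⟩)
      · have hj1 : 1 ≤ j := by
          rcases Nat.eq_zero_or_pos j with rfl | h
          · exact absurd hjod (by simp)
          · exact h
        have hlt : j - 1 < s := by omega
        have hmod : (j-1) % 2 = 0 := by
          have := Nat.odd_iff.mp hjod; omega
        have h1 : f (j-1) ∈ Mopt := (hedge (j-1) hlt).1 hmod
        have hqj : q j ∈ f (j-1) := by
          have : j - 1 + 1 = j := by omega
          rw [hf]; simp only [this]; exact Sym2.mem_mk_right _ _
        have h2 : e = f (j-1) := matching_eq hMopt he h1 hqe hqj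
        exact hePO (h2 ▸ ⟨j-1, ⟨hlt, hmod⟩, rfl⟩)
  have hconf : ∀ e ∈ Mopt, e ∉ PO → ∀ g ∈ PM, ∀ x, x ∈ e → x ∉ g := by
    rintro e he hePO g ⟨l, ⟨hl, hl2⟩, rfl⟩ x hxe hxg
    rcases Sym2.mem_iff.mp hxg with rfl | rfl
    · exact hopt_at l (le_of_lt hl) e he hxe hePO
    · exact hopt_at (l+1) hl e he hxe hePO
  have hMMO : ∀ e ∈ M, e ∈ Mopt → e ∉ PO := by
    rintro e heM heO ⟨l, ⟨hl, _⟩, rfl⟩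
    exact hNC l (le_of_lt hl) (f l) heM heO (Sym2.mem_mk_left _ _)
  exact swap_core hM hMopt hext PO PM hPO hPM hPMO hcard hne hconf hMMO

lemma swap_cycle [Fintype V] {G : SimpleGraph V} {M Mopt : Set (Sym2 V)}
    (hM : IsMatchingSet G M) (hMopt : IsMatchingSet G Mopt)
    (hext : ∀ N, IsMatchingSet G N → N.ncard = Mopt.ncard → (M ∩ N).ncard ≤ (M ∩ Mopt).ncard)
    {s : ℕ} {q : ℕ → V} (hso : s % 2 = 1)
    (hinj : ∀ i ≤ s, ∀ j ≤ s, q i = q j → i = j)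
    (hedge : ∀ l < s, (l % 2 = 0 → s(q l, q (l+1)) ∈ M) ∧ (l % 2 = 1 → s(q l, q (l+1)) ∈ Mopt))
    (hclose : s(q s, q 0) ∈ Mopt)
    (hNC : ∀ l ≤ s, ∀ e ∈ M, e ∈ Mopt → q l ∉ e) : False := by
  set f : ℕ → Sym2 V := fun l => s(q l, q (l+1)) with hf
  have hfinj : Set.InjOn f {l | l < s} := by
    intro a ha b hb h
    rw [hf] at h
    simp only at h
    rcases Sym2.eq_iff.mp h with ⟨h1, _⟩ | ⟨h1, h2⟩
    · exact hinj a (le_of_lt ha) b (le_of_lt hb) h1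
    · have ha1 : a = b + 1 := hinj a (le_of_lt ha) (b+1) hb h1
      have hb1 : a + 1 = b := hinj (a+1) ha b (le_of_lt hb) h2
      omega
  set PM : Set (Sym2 V) := f '' {l | l < s ∧ l % 2 = 0} with hPMdef
  set PO : Set (Sym2 V) := insert s(q s, q 0) (f '' {l | l < s ∧ l % 2 = 1}) with hPOdef
  have hPO : PO ⊆ Mopt := by
    rintro e (rfl | ⟨l, ⟨hl, hl2⟩, rfl⟩)
    · exact hclose
    · exact (hedge l hl).2 hl2
  have hPM : PM ⊆ M := by
    rintro e ⟨l, ⟨hl, hl2⟩, rfl⟩; exact (hedge l hl).1 hl2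
  have hPMO : ∀ e ∈ PM, e ∉ Mopt := by
    rintro e ⟨l, ⟨hl, hl2⟩, rfl⟩ hopt
    exact hNC l (le_of_lt hl) (f l) ((hedge l hl).1 hl2) hopt (Sym2.mem_mk_left _ _)
  have hnotmem : s(q s, q 0) ∉ f '' {l | l < s ∧ l % 2 = 1} := by
    rintro ⟨l, ⟨hl, hl2⟩, h⟩
    rw [hf] at h; simp only at h
    rcases Sym2.eq_iff.mp h with ⟨h1, _⟩ | ⟨h1, h2⟩
    · have := hinj l (le_of_lt hl) s le_rfl h1; omega
    · have := hinj l (le_of_lt hl) 0 (Nat.zero_le s) h1; omega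
  have hcard : PM.ncard = PO.ncard := by
    rw [hPOdef, hPMdef, Set.ncard_image_of_injOn (hfinj.mono (fun l hl => hl.1)),
      Set.ncard_insert_of_notMem hnotmem (Set.toFinite _),
      Set.ncard_image_of_injOn (hfinj.mono (fun l hl => hl.1)),
      (parity_ncard s).1, (parity_ncard s).2]
    omega
  have hne : PM.Nonempty := ⟨f 0, 0, ⟨by omega, by norm_num⟩, rfl⟩
  have hopt_at : ∀ j ≤ s, ∀ e ∈ Mopt, q j ∈ e → e ∉ PO → False := by
    intro j hj e he hqe hePO
    rcases Nat.eq_zero_or_pos j with rfl | hj0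
    · have h2 : e = s(q s, q 0) :=
        matching_eq hMopt he hclose hqe (Sym2.mem_mk_right _ _)
      exact hePO (h2 ▸ Or.inl rfl)
    rcases eq_or_lt_of_le hj with rfl | hjs
    · have h2 : e = s(q j, q 0) :=
        matching_eq hMopt he hclose hqe (Sym2.mem_mk_left _ _)
      exact hePO (h2 ▸ Or.inl rfl)
    rcases Nat.even_or_odd j with hjev | hjod
    · have hlt : j - 1 < s := by omega
      have hmod : (j-1) % 2 = 1 := by
        have := Nat.even_iff.mp hjev; omega
      have h1 : f (j-1) ∈ Mopt := (hedge (j-1) hlt).2 hmod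
      have hqj : q j ∈ f (j-1) := by
        have hq : j - 1 + 1 = j := by omega
        rw [hf]; simp only [hq]; exact Sym2.mem_mk_right _ _
      have h2 : e = f (j-1) := matching_eq hMopt he h1 hqe hqj
      exact hePO (h2 ▸ Or.inr ⟨j-1, ⟨hlt, hmod⟩, rfl⟩)
    · have h1 : f j ∈ Mopt := (hedge j hjs).2 (Nat.odd_iff.mp hjod)
      have h2 : e = f j := matching_eq hMopt he h1 hqe (Sym2.mem_mk_left _ _)
      exact hePO (h2 ▸ Or.inr ⟨j, ⟨hjs, Nat.odd_iff.mp hjod⟩, rfl⟩)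
  have hconf : ∀ e ∈ Mopt, e ∉ PO → ∀ g ∈ PM, ∀ x, x ∈ e → x ∉ g := by
    rintro e he hePO g ⟨l, ⟨hl, hl2⟩, rfl⟩ x hxe hxg
    rcases Sym2.mem_iff.mp hxg with rfl | rfl
    · exact hopt_at l (le_of_lt hl) e he hxe hePO
    · exact hopt_at (l+1) hl e he hxe hePO
  have hMMO : ∀ e ∈ M, e ∈ Mopt → e ∉ PO := by
    rintro e heM heO (rfl | ⟨l, ⟨hl, _⟩, rfl⟩)
    · exact hNC 0 (Nat.zero_le s) _ heM heO (Sym2.mem_mk_right _ _)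
    · exact hNC l (le_of_lt hl) (f l) heM heO (Sym2.mem_mk_left _ _)
  exact swap_core hM hMopt hext PO PM hPO hPM hPMO hcard hne hconf hMMO

lemma supp_adj {H : SimpleGraph V} {C : H.ConnectedComponent} {x y : V}
    (hx : x ∈ C.supp) (h : H.Adj x y) : y ∈ C.supp := by
  rw [SimpleGraph.ConnectedComponent.mem_supp_iff] at hx ⊢
  rw [← hx]
  exact (SimpleGraph.ConnectedComponent.connectedComponentMk_eq_of_adj h.symm)

lemma inj_lt_card [Fintype V] (s : ℕ) (q : ℕ → V)
    (hinj : ∀ i ≤ s, ∀ j ≤ s, q i = q j → i = j) : s < Fintype.card V := by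
  have h := Finset.card_le_card_of_injOn q (fun a _ => Finset.mem_univ (q a))
    (fun a ha b hb h => hinj a (Nat.lt_succ_iff.mp (Finset.mem_range.mp ha))
      b (Nat.lt_succ_iff.mp (Finset.mem_range.mp hb)) h)
  rw [Finset.card_range] at h
  have : (Finset.univ : Finset V).card = Fintype.card V := rfl
  omega

lemma walkA [Fintype V] {G : SimpleGraph V} {M Mopt : Set (Sym2 V)}
    (hM : IsMatchingSet G M) (hMopt : IsMatchingSet G Mopt)
    (hext : ∀ N, IsMatchingSet G N → N.ncard = Mopt.ncard → (M ∩ N).ncard ≤ (M ∩ Mopt).ncard)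
    {C : (fromEdgeSet (M ∪ Mopt)).ConnectedComponent}
    (hNC : ∀ x ∈ C.supp, ∀ e ∈ M, e ∈ Mopt → x ∉ e) :
    ∀ fuel s (q : ℕ → V),
    Fintype.card V ≤ fuel + s →
    (∀ i ≤ s, ∀ j ≤ s, q i = q j → i = j) →
    (∀ l ≤ s, q l ∈ C.supp) →
    (∀ l < s, (l % 2 = 0 → s(q l, q (l+1)) ∈ Mopt) ∧ (l % 2 = 1 → s(q l, q (l+1)) ∈ M)) →
    (∀ z, s(q 0, z) ∉ M) →
    (∃ z, s(q 0, z) ∈ Mopt) →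
    ∃ m p, IsAugPath M Mopt m p ∧ ∀ l ≤ 2*m+1, p l ∈ C.supp := by
  intro fuel
  induction fuel with
  | zero =>
    intro s q hcard hinj _ _ _ _
    exact absurd (inj_lt_card s q hinj) (by omega)
  | succ fuel ih =>
    intro s q hcard hinj hsupp hedge hq0M hq0O
    rcases Nat.even_or_odd s with hse | hso
    · -- s even : next edge should be an Mopt edge
      have hse' : s % 2 = 0 := Nat.even_iff.mp hse
      by_cases hz : ∃ z, s(q s, z) ∈ Mopt
      · obtain ⟨z, hzopt⟩ := hz
        have hzC : z ∈ C.supp := by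
          apply supp_adj (hsupp s le_rfl)
          rw [fromEdgeSet_adj]
          exact ⟨Or.inr hzopt, matching_ne hMopt hzopt⟩
        have hfresh : ∀ i ≤ s, z ≠ q i := by
          intro i hi hzi
          rw [hzi] at hzopt
          have hne : q s ≠ q i := matching_ne hMopt hzopt
          have his : i ≠ s := by rintro rfl; exact hne rfl
          have hilt : i < s := lt_of_le_of_ne hi his
          have h2 : s(q i, q s) ∈ Mopt := by rw [Sym2.eq_swap]; exact hzopt
          rcases Nat.eq_zero_or_pos i with rfl | hip
          · have h0 : s(q 0, q 1) ∈ Mopt := (hedge 0 (by omega)).1 (by norm_num)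
            have h3 := matching_unique hMopt h0 h2
            have := hinj 1 (by omega) s le_rfl h3
            omega
          · rcases Nat.even_or_odd i with hiev | hiod
            · have h1 : s(q i, q (i+1)) ∈ Mopt := (hedge i hilt).1 (Nat.even_iff.mp hiev)
              have h3 := matching_unique hMopt h1 h2
              have := hinj (i+1) hilt s le_rfl h3
              have := Nat.even_iff.mp hiev
              omega
            · have hm : (i-1) % 2 = 0 := by have := Nat.odd_iff.mp hiod; omega
              have h1 : s(q (i-1), q (i-1+1)) ∈ Mopt := (hedge (i-1) (by omega)).1 hm
              have heq : i - 1 + 1 = i := by omega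
              rw [heq] at h1
              have h1' : s(q i, q (i-1)) ∈ Mopt := by rw [Sym2.eq_swap]; exact h1
              have h3 := matching_unique hMopt h1' h2
              have := hinj (i-1) (by omega) s le_rfl h3
              omega
        let q' : ℕ → V := fun l => if l = s + 1 then z else q l
        have hq'le : ∀ l, l ≤ s → q' l = q l := by
          intro l hl
          show (if l = s+1 then z else q l) = q l
          rw [if_neg (by omega)]
        have hq's1 : q' (s+1) = z := by
          show (if s+1 = s+1 then z else q (s+1)) = z
          rw [if_pos rfl]
        apply ih (s+1) q' (by omega)
        · intro i hi j hj hij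
          by_cases hi' : i ≤ s <;> by_cases hj' : j ≤ s
          · rw [hq'le i hi', hq'le j hj'] at hij
            exact hinj i hi' j hj' hij
          · have hj'' : j = s+1 := by omega
            rw [hq'le i hi', hj'', hq's1] at hij
            exact absurd hij.symm (hfresh i hi')
          · have hi'' : i = s+1 := by omega
            rw [hq'le j hj', hi'', hq's1] at hij
            exact absurd hij (hfresh j hj')
          · omega
        · intro l hl
          by_cases hl' : l ≤ s
          · rw [hq'le l hl']; exact hsupp l hl'
          · have : l = s+1 := by omega
            rw [this, hq's1]; exact hzC
        · intro l hl
          by_cases hl' : l < s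
          · rw [hq'le l (by omega), hq'le (l+1) (by omega)]
            exact hedge l hl'
          · have : l = s := by omega
            subst this
            rw [hq'le l le_rfl, hq's1]
            exact ⟨fun _ => hzopt, fun h => absurd h (by omega)⟩
        · intro z'
          rw [hq'le 0 (by omega)]
          exact hq0M z'
        · obtain ⟨w, hw⟩ := hq0O
          exact ⟨w, by rw [hq'le 0 (by omega)]; exact hw⟩
      · exfalso
        rcases Nat.eq_zero_or_pos s with rfl | hs0
        · obtain ⟨z, hz0⟩ := hq0O
          exact hz ⟨z, hz0⟩
        · exact swap_path hM hMopt hext (by omega) hse' hinj hedge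
            (fun l hl e heM heO => hNC (q l) (hsupp l hl) e heM heO)
            (fun z hzz => hz ⟨z, hzz⟩)
    · -- s odd : next edge should be an M edge
      have hso' : s % 2 = 1 := Nat.odd_iff.mp hso
      by_cases hz : ∃ z, s(q s, z) ∈ M
      · obtain ⟨z, hzM⟩ := hz
        have hzC : z ∈ C.supp := by
          apply supp_adj (hsupp s le_rfl)
          rw [fromEdgeSet_adj]
          exact ⟨Or.inl hzM, matching_ne hM hzM⟩
        have hfresh : ∀ i ≤ s, z ≠ q i := by
          intro i hi hzi
          rw [hzi] at hzM
          have hne : q s ≠ q i := matching_ne hM hzM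
          have his : i ≠ s := by rintro rfl; exact hne rfl
          have hilt : i < s := lt_of_le_of_ne hi his
          have h2 : s(q i, q s) ∈ M := by rw [Sym2.eq_swap]; exact hzM
          rcases Nat.eq_zero_or_pos i with rfl | hip
          · exact hq0M (q s) h2
          · rcases Nat.even_or_odd i with hiev | hiod
            · have hm : (i-1) % 2 = 1 := by have := Nat.even_iff.mp hiev; omega
              have h1 : s(q (i-1), q (i-1+1)) ∈ M := (hedge (i-1) (by omega)).2 hm
              have heq : i - 1 + 1 = i := by omega
              rw [heq] at h1
              have h1' : s(q i, q (i-1)) ∈ M := by rw [Sym2.eq_swap]; exact h1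
              have h3 := matching_unique hM h1' h2
              have := hinj (i-1) (by omega) s le_rfl h3
              omega
            · have h1 : s(q i, q (i+1)) ∈ M := (hedge i hilt).2 (Nat.odd_iff.mp hiod)
              have h3 := matching_unique hM h1 h2
              have := hinj (i+1) hilt s le_rfl h3
              have := Nat.odd_iff.mp hiod
              omega
        let q' : ℕ → V := fun l => if l = s + 1 then z else q l
        have hq'le : ∀ l, l ≤ s → q' l = q l := by
          intro l hl
          show (if l = s+1 then z else q l) = q l
          rw [if_neg (by omega)]
        have hq's1 : q' (s+1) = z := by
          show (if s+1 = s+1 then z else q (s+1)) = z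
          rw [if_pos rfl]
        apply ih (s+1) q' (by omega)
        · intro i hi j hj hij
          by_cases hi' : i ≤ s <;> by_cases hj' : j ≤ s
          · rw [hq'le i hi', hq'le j hj'] at hij
            exact hinj i hi' j hj' hij
          · have hj'' : j = s+1 := by omega
            rw [hq'le i hi', hj'', hq's1] at hij
            exact absurd hij.symm (hfresh i hi')
          · have hi'' : i = s+1 := by omega
            rw [hq'le j hj', hi'', hq's1] at hij
            exact absurd hij (hfresh j hj')
          · omega
        · intro l hl
          by_cases hl' : l ≤ s
          · rw [hq'le l hl']; exact hsupp l hl'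
          · have : l = s+1 := by omega
            rw [this, hq's1]; exact hzC
        · intro l hl
          by_cases hl' : l < s
          · rw [hq'le l (by omega), hq'le (l+1) (by omega)]
            exact hedge l hl'
          · have : l = s := by omega
            subst this
            rw [hq'le l le_rfl, hq's1]
            exact ⟨fun h => absurd h (by omega), fun _ => hzM⟩
        · intro z'
          rw [hq'le 0 (by omega)]
          exact hq0M z'
        · obtain ⟨w, hw⟩ := hq0O
          exact ⟨w, by rw [hq'le 0 (by omega)]; exact hw⟩
      · -- no M partner at q s : augmenting path found
        refine ⟨s / 2, q, ⟨?_, ?_, ?_⟩, ?_⟩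
        · intro i hi j hj hij
          exact hinj i (by omega) j (by omega) hij
        · intro j hj
          exact hedge j (by omega)
        · intro e heM
          constructor
          · intro hxe
            obtain ⟨y, rfl⟩ := mem_form hxe
            exact hq0M y heM
          · have h2 : 2 * (s / 2) + 1 = s := by omega
            rw [h2]
            intro hxe
            obtain ⟨y, rfl⟩ := mem_form hxe
            exact hz ⟨y, heM⟩
        · intro l hl
          exact hsupp l (by omega)

lemma walkB [Fintype V] {G : SimpleGraph V} {M Mopt : Set (Sym2 V)}
    (hM : IsMatchingSet G M) (hMopt : IsMatchingSet G Mopt)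
    (hext : ∀ N, IsMatchingSet G N → N.ncard = Mopt.ncard → (M ∩ N).ncard ≤ (M ∩ Mopt).ncard)
    {C : (fromEdgeSet (M ∪ Mopt)).ConnectedComponent}
    (hNC : ∀ x ∈ C.supp, ∀ e ∈ M, e ∈ Mopt → x ∉ e) :
    ∀ fuel s (q : ℕ → V),
    Fintype.card V ≤ fuel + s →
    (∀ i ≤ s, ∀ j ≤ s, q i = q j → i = j) →
    (∀ l ≤ s, q l ∈ C.supp) →
    (∀ l < s, (l % 2 = 0 → s(q l, q (l+1)) ∈ M) ∧ (l % 2 = 1 → s(q l, q (l+1)) ∈ Mopt)) →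
    (∃ w, s(q 0, w) ∈ M) →
    (∃ y, s(q 0, y) ∈ Mopt) →
    ∃ v, v ∈ C.supp ∧ (∃ w, s(v, w) ∈ Mopt) ∧ (∀ w, s(v, w) ∉ M) := by
  intro fuel
  induction fuel with
  | zero =>
    intro s q hcard hinj _ _ _ _
    exact absurd (inj_lt_card s q hinj) (by omega)
  | succ fuel ih =>
    intro s q hcard hinj hsupp hedge hq0M hq0O
    have hNCq : ∀ l ≤ s, ∀ e ∈ M, e ∈ Mopt → q l ∉ e :=
      fun l hl e heM heO => hNC (q l) (hsupp l hl) e heM heO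
    rcases Nat.even_or_odd s with hse | hso
    · -- s even : next edge should be an M edge
      have hse' : s % 2 = 0 := Nat.even_iff.mp hse
      by_cases hz : ∃ z, s(q s, z) ∈ M
      · obtain ⟨z, hzM⟩ := hz
        have hzC : z ∈ C.supp := by
          apply supp_adj (hsupp s le_rfl)
          rw [fromEdgeSet_adj]
          exact ⟨Or.inl hzM, matching_ne hM hzM⟩
        have hfresh : ∀ i ≤ s, z ≠ q i := by
          intro i hi hzi
          rw [hzi] at hzM
          have hne : q s ≠ q i := matching_ne hM hzM
          have his : i ≠ s := by rintro rfl; exact hne rfl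
          have hilt : i < s := lt_of_le_of_ne hi his
          have h2 : s(q i, q s) ∈ M := by rw [Sym2.eq_swap]; exact hzM
          rcases Nat.eq_zero_or_pos i with rfl | hip
          · have h0 : s(q 0, q 1) ∈ M := (hedge 0 (by omega)).1 (by norm_num)
            have h3 := matching_unique hM h0 h2
            have := hinj 1 (by omega) s le_rfl h3
            omega
          · rcases Nat.even_or_odd i with hiev | hiod
            · have h1 : s(q i, q (i+1)) ∈ M := (hedge i hilt).1 (Nat.even_iff.mp hiev)
              have h3 := matching_unique hM h1 h2
              have := hinj (i+1) hilt s le_rfl h3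
              have := Nat.even_iff.mp hiev
              omega
            · have hm : (i-1) % 2 = 0 := by have := Nat.odd_iff.mp hiod; omega
              have h1 : s(q (i-1), q (i-1+1)) ∈ M := (hedge (i-1) (by omega)).1 hm
              have heq : i - 1 + 1 = i := by omega
              rw [heq] at h1
              have h1' : s(q i, q (i-1)) ∈ M := by rw [Sym2.eq_swap]; exact h1
              have h3 := matching_unique hM h1' h2
              have := hinj (i-1) (by omega) s le_rfl h3
              omega
        let q' : ℕ → V := fun l => if l = s + 1 then z else q l
        have hq'le : ∀ l, l ≤ s → q' l = q l := by
          intro l hl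
          show (if l = s+1 then z else q l) = q l
          rw [if_neg (by omega)]
        have hq's1 : q' (s+1) = z := by
          show (if s+1 = s+1 then z else q (s+1)) = z
          rw [if_pos rfl]
        apply ih (s+1) q' (by omega)
        · intro i hi j hj hij
          by_cases hi' : i ≤ s <;> by_cases hj' : j ≤ s
          · rw [hq'le i hi', hq'le j hj'] at hij
            exact hinj i hi' j hj' hij
          · have hj'' : j = s+1 := by omega
            rw [hq'le i hi', hj'', hq's1] at hij
            exact absurd hij.symm (hfresh i hi')
          · have hi'' : i = s+1 := by omega
            rw [hq'le j hj', hi'', hq's1] at hij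
            exact absurd hij (hfresh j hj')
          · omega
        · intro l hl
          by_cases hl' : l ≤ s
          · rw [hq'le l hl']; exact hsupp l hl'
          · have : l = s+1 := by omega
            rw [this, hq's1]; exact hzC
        · intro l hl
          by_cases hl' : l < s
          · rw [hq'le l (by omega), hq'le (l+1) (by omega)]
            exact hedge l hl'
          · have : l = s := by omega
            subst this
            rw [hq'le l le_rfl, hq's1]
            exact ⟨fun _ => hzM, fun h => absurd h (by omega)⟩
        · obtain ⟨w, hw⟩ := hq0M
          exact ⟨w, by rw [hq'le 0 (by omega)]; exact hw⟩
        · obtain ⟨w, hw⟩ := hq0O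
          exact ⟨w, by rw [hq'le 0 (by omega)]; exact hw⟩
      · -- q s has no M partner : found the desired vertex
        rcases Nat.eq_zero_or_pos s with rfl | hs0
        · obtain ⟨w, hw⟩ := hq0M
          exact absurd ⟨w, hw⟩ hz
        · refine ⟨q s, hsupp s le_rfl, ⟨q (s-1), ?_⟩, fun w hw => hz ⟨w, hw⟩⟩
          have hm : (s-1) % 2 = 1 := by omega
          have h1 : s(q (s-1), q (s-1+1)) ∈ Mopt := (hedge (s-1) (by omega)).2 hm
          have heq : s - 1 + 1 = s := by omega
          rw [heq] at h1
          rw [Sym2.eq_swap]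
          exact h1
    · -- s odd : next edge should be an Mopt edge
      have hso' : s % 2 = 1 := Nat.odd_iff.mp hso
      by_cases hz : ∃ z, s(q s, z) ∈ Mopt
      · obtain ⟨z, hzO⟩ := hz
        have hzC : z ∈ C.supp := by
          apply supp_adj (hsupp s le_rfl)
          rw [fromEdgeSet_adj]
          exact ⟨Or.inr hzO, matching_ne hMopt hzO⟩
        have hfresh : ∀ i ≤ s, z ≠ q i := by
          intro i hi hzi
          rw [hzi] at hzO
          have hne : q s ≠ q i := matching_ne hMopt hzO
          have his : i ≠ s := by rintro rfl; exact hne rfl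
          have hilt : i < s := lt_of_le_of_ne hi his
          have h2 : s(q i, q s) ∈ Mopt := by rw [Sym2.eq_swap]; exact hzO
          rcases Nat.eq_zero_or_pos i with rfl | hip
          · -- cycle case : contradiction by the swap argument
            exact swap_cycle hM hMopt hext hso' hinj hedge hzO hNCq
          · rcases Nat.even_or_odd i with hiev | hiod
            · have hm : (i-1) % 2 = 1 := by have := Nat.even_iff.mp hiev; omega
              have h1 : s(q (i-1), q (i-1+1)) ∈ Mopt := (hedge (i-1) (by omega)).2 hm
              have heq : i - 1 + 1 = i := by omega
              rw [heq] at h1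
              have h1' : s(q i, q (i-1)) ∈ Mopt := by rw [Sym2.eq_swap]; exact h1
              have h3 := matching_unique hMopt h1' h2
              have := hinj (i-1) (by omega) s le_rfl h3
              omega
            · have h1 : s(q i, q (i+1)) ∈ Mopt := (hedge i hilt).2 (Nat.odd_iff.mp hiod)
              have h3 := matching_unique hMopt h1 h2
              have := hinj (i+1) hilt s le_rfl h3
              have := Nat.odd_iff.mp hiod
              omega
        let q' : ℕ → V := fun l => if l = s + 1 then z else q l
        have hq'le : ∀ l, l ≤ s → q' l = q l := by
          intro l hl
          show (if l = s+1 then z else q l) = q l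
          rw [if_neg (by omega)]
        have hq's1 : q' (s+1) = z := by
          show (if s+1 = s+1 then z else q (s+1)) = z
          rw [if_pos rfl]
        apply ih (s+1) q' (by omega)
        · intro i hi j hj hij
          by_cases hi' : i ≤ s <;> by_cases hj' : j ≤ s
          · rw [hq'le i hi', hq'le j hj'] at hij
            exact hinj i hi' j hj' hij
          · have hj'' : j = s+1 := by omega
            rw [hq'le i hi', hj'', hq's1] at hij
            exact absurd hij.symm (hfresh i hi')
          · have hi'' : i = s+1 := by omega
            rw [hq'le j hj', hi'', hq's1] at hij
            exact absurd hij (hfresh j hj')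
          · omega
        · intro l hl
          by_cases hl' : l ≤ s
          · rw [hq'le l hl']; exact hsupp l hl'
          · have : l = s+1 := by omega
            rw [this, hq's1]; exact hzC
        · intro l hl
          by_cases hl' : l < s
          · rw [hq'le l (by omega), hq'le (l+1) (by omega)]
            exact hedge l hl'
          · have : l = s := by omega
            subst this
            rw [hq'le l le_rfl, hq's1]
            exact ⟨fun h => absurd h (by omega), fun _ => hzO⟩
        · obtain ⟨w, hw⟩ := hq0M
          exact ⟨w, by rw [hq'le 0 (by omega)]; exact hw⟩
        · obtain ⟨w, hw⟩ := hq0O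
          exact ⟨w, by rw [hq'le 0 (by omega)]; exact hw⟩
      · -- q s has no Mopt partner : prepend y and apply the path swap argument
        exfalso
        obtain ⟨y, hy⟩ := hq0O
        have hyfresh : ∀ l ≤ s, y ≠ q l := by
          intro l hl hyl
          rw [hyl] at hy
          rcases Nat.eq_zero_or_pos l with rfl | hl0
          · exact matching_ne hMopt hy rfl
          rcases eq_or_lt_of_le hl with rfl | hls
          · have : s(q l, q 0) ∈ Mopt := by rw [Sym2.eq_swap]; exact hy
            exact hz ⟨q 0, this⟩
          have h2 : s(q l, q 0) ∈ Mopt := by rw [Sym2.eq_swap]; exact hy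
          rcases Nat.even_or_odd l with hlev | hlod
          · have hm : (l-1) % 2 = 1 := by have := Nat.even_iff.mp hlev; omega
            have h1 : s(q (l-1), q (l-1+1)) ∈ Mopt := (hedge (l-1) (by omega)).2 hm
            have heq : l - 1 + 1 = l := by omega
            rw [heq] at h1
            have h1' : s(q l, q (l-1)) ∈ Mopt := by rw [Sym2.eq_swap]; exact h1
            have h3 := matching_unique hMopt h1' h2
            have := hinj (l-1) (by omega) 0 (by omega) h3
            have := Nat.even_iff.mp hlev
            omega
          · have h1 : s(q l, q (l+1)) ∈ Mopt := (hedge l hls).2 (Nat.odd_iff.mp hlod)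
            have h3 := matching_unique hMopt h1 h2
            have := hinj (l+1) hls 0 (by omega) h3
            omega
        have hyC : y ∈ C.supp := by
          apply supp_adj (hsupp 0 (by omega))
          rw [fromEdgeSet_adj]
          exact ⟨Or.inr hy, matching_ne hMopt hy⟩
        let r : ℕ → V := fun t => if t = 0 then y else q (t-1)
        have hr0 : r 0 = y := rfl
        have hrpos : ∀ t, 1 ≤ t → r t = q (t-1) := by
          intro t ht
          show (if t = 0 then y else q (t-1)) = q (t-1)
          rw [if_neg (by omega)]
        apply swap_path hM hMopt hext (s := s+1) (q := r) (by omega) (by omega)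
        · intro i hi j hj hij
          rcases Nat.eq_zero_or_pos i with rfl | hi0 <;> rcases Nat.eq_zero_or_pos j with rfl | hj0
          · rfl
          · rw [hr0, hrpos j hj0] at hij
            exact absurd (hinj (j-1) (by omega) (j-1) (by omega) rfl) (fun _ => hyfresh (j-1) (by omega) hij)
          · rw [hr0, hrpos i hi0] at hij
            exact absurd (hinj (i-1) (by omega) (i-1) (by omega) rfl) (fun _ => hyfresh (i-1) (by omega) hij.symm)
          · rw [hrpos i hi0, hrpos j hj0] at hij
            have := hinj (i-1) (by omega) (j-1) (by omega) hij
            omega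
        · intro l hl
          rcases Nat.eq_zero_or_pos l with rfl | hl0
          · constructor
            · intro _
              rw [hr0, hrpos 1 le_rfl]
              show s(y, q 0) ∈ Mopt
              rw [Sym2.eq_swap]
              exact hy
            · intro h; exact absurd h (by omega)
          · rw [hrpos l hl0, hrpos (l+1) (by omega)]
            have heq : l + 1 - 1 = l := by omega
            rw [heq]
            have hlt : l - 1 < s := by omega
            constructor
            · intro hpar
              have hm : (l-1) % 2 = 1 := by omega
              have h1 := (hedge (l-1) hlt).2 hm
              have heq2 : l - 1 + 1 = l := by omega
              rw [heq2] at h1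
              exact h1
            · intro hpar
              have hm : (l-1) % 2 = 0 := by omega
              have h1 := (hedge (l-1) hlt).1 hm
              have heq2 : l - 1 + 1 = l := by omega
              rw [heq2] at h1
              exact h1
        · intro l hl e heM heO
          rcases Nat.eq_zero_or_pos l with rfl | hl0
          · rw [hr0]; exact hNC y hyC e heM heO
          · rw [hrpos l hl0]; exact hNCq (l-1) (by omega) e heM heO
        · intro z hzz
          rw [hrpos (s+1) (by omega)] at hzz
          have heq : s + 1 - 1 = s := by omega
          rw [heq] at hzz
          exact hz ⟨z, hzz⟩

lemma walk_mem {H : SimpleGraph V} {S : Set V} (hS : ∀ x ∈ S, ∀ y, H.Adj x y → y ∈ S) :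
    ∀ {a b : V}, H.Walk a b → a ∈ S → b ∈ S
  | _, _, SimpleGraph.Walk.nil, ha => ha
  | _, _, SimpleGraph.Walk.cons h p, ha => walk_mem hS p (hS _ ha _ h)

lemma path_supp_eq {G : SimpleGraph V} {M Mopt : Set (Sym2 V)}
    (hM : IsMatchingSet G M) (hMopt : IsMatchingSet G Mopt)
    {C : (fromEdgeSet (M ∪ Mopt)).ConnectedComponent} {m : ℕ} {p : ℕ → V}
    (hAug : IsAugPath M Mopt m p) (hmem : ∀ l ≤ 2*m+1, p l ∈ C.supp) :
    C.supp = pathSupp m p := by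
  apply Set.Subset.antisymm
  · intro u hu
    have h0 : p 0 ∈ C.supp := hmem 0 (by omega)
    rw [SimpleGraph.ConnectedComponent.mem_supp_iff] at hu h0
    have hreach : (fromEdgeSet (M ∪ Mopt)).Reachable (p 0) u :=
      SimpleGraph.ConnectedComponent.exact (h0.trans hu.symm)
    obtain ⟨w⟩ := hreach
    refine walk_mem ?_ w ⟨0, show (0:ℕ) ≤ 2*m+1 by omega, rfl⟩
    rintro x ⟨j, hj, rfl⟩ y hadj
    rw [fromEdgeSet_adj] at hadj
    obtain ⟨hmem', hne⟩ := hadj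
    have hj' : j ≤ 2*m+1 := hj
    rcases hmem' with hMe | hOe
    · have hj0 : j ≠ 0 := by rintro rfl; exact (hAug.2.2 _ hMe).1 (Sym2.mem_mk_left _ _)
      have hjtop : j ≠ 2*m+1 := by rintro rfl; exact (hAug.2.2 _ hMe).2 (Sym2.mem_mk_left _ _)
      rcases Nat.even_or_odd j with hjev | hjod
      · have hm2 : (j-1) % 2 = 1 := by have := Nat.even_iff.mp hjev; omega
        have h1 : s(p (j-1), p (j-1+1)) ∈ M := (hAug.2.1 (j-1) (by omega)).2 hm2
        rw [(show j-1+1 = j by omega)] at h1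
        have h1' : s(p j, p (j-1)) ∈ M := by rw [Sym2.eq_swap]; exact h1
        have h3 := matching_unique hM hMe h1'
        exact ⟨j-1, show j-1 ≤ 2*m+1 by omega, h3.symm⟩
      · have h1 : s(p j, p (j+1)) ∈ M := (hAug.2.1 j (by omega)).2 (Nat.odd_iff.mp hjod)
        have h3 := matching_unique hM hMe h1
        exact ⟨j+1, show j+1 ≤ 2*m+1 by omega, h3.symm⟩
    · rcases Nat.even_or_odd j with hjev | hjod
      · have hjle : j ≤ 2*m := by have := Nat.even_iff.mp hjev; omega
        have h1 : s(p j, p (j+1)) ∈ Mopt := (hAug.2.1 j hjle).1 (Nat.even_iff.mp hjev)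
        have h3 := matching_unique hMopt hOe h1
        exact ⟨j+1, show j+1 ≤ 2*m+1 by omega, h3.symm⟩
      · have hj1 : 1 ≤ j := by have := Nat.odd_iff.mp hjod; omega
        have hm2 : (j-1) % 2 = 0 := by have := Nat.odd_iff.mp hjod; omega
        have h1 : s(p (j-1), p (j-1+1)) ∈ Mopt := (hAug.2.1 (j-1) (by omega)).1 hm2
        rw [(show j-1+1 = j by omega)] at h1
        have h1' : s(p j, p (j-1)) ∈ Mopt := by rw [Sym2.eq_swap]; exact h1
        have h3 := matching_unique hMopt hOe h1'
        exact ⟨j-1, show j-1 ≤ 2*m+1 by omega, h3.symm⟩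
  · rintro u ⟨j, hj, rfl⟩
    exact hmem j hj

lemma single_supp_eq {G : SimpleGraph V} {M Mopt : Set (Sym2 V)}
    (hM : IsMatchingSet G M) (hMopt : IsMatchingSet G Mopt)
    {C : (fromEdgeSet (M ∪ Mopt)).ConnectedComponent} {x y : V} (hxC : x ∈ C.supp)
    (hxyM : s(x,y) ∈ M) (hxyO : s(x,y) ∈ Mopt) : C.supp = {x, y} := by
  have hne : x ≠ y := matching_ne hM hxyM
  have hadjxy : (fromEdgeSet (M ∪ Mopt)).Adj x y := by
    rw [fromEdgeSet_adj]; exact ⟨Or.inl hxyM, hne⟩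
  apply Set.Subset.antisymm
  · intro u hu
    have hu' := hu
    rw [SimpleGraph.ConnectedComponent.mem_supp_iff] at hu'
    have hx' := hxC
    rw [SimpleGraph.ConnectedComponent.mem_supp_iff] at hx'
    have hreach : (fromEdgeSet (M ∪ Mopt)).Reachable x u :=
      SimpleGraph.ConnectedComponent.exact (hx'.trans hu'.symm)
    obtain ⟨w⟩ := hreach
    refine walk_mem ?_ w (Or.inl rfl)
    rintro a (rfl | rfl) b hadj <;> rw [fromEdgeSet_adj] at hadj
    · rcases hadj.1 with hMe | hOe
      · have := matching_unique hM hxyM hMe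
        exact Or.inr this.symm
      · have := matching_unique hMopt hxyO hOe
        exact Or.inr this.symm
    · have hxyM' : s(a, x) ∈ M := by rw [Sym2.eq_swap]; exact hxyM
      have hxyO' : s(a, x) ∈ Mopt := by rw [Sym2.eq_swap]; exact hxyO
      rcases hadj.1 with hMe | hOe
      · have := matching_unique hM hxyM' hMe
        exact Or.inl this.symm
      · have := matching_unique hMopt hxyO' hOe
        exact Or.inl this.symm
  · rintro u (rfl | rfl)
    · exact hxC
    · exact supp_adj hxC hadjxy

lemma augment_contra [Fintype V] {G : SimpleGraph V} {M Mopt : Set (Sym2 V)}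
    (hM : IsMatchingSet G M) (hMopt : IsMatchingSet G Mopt)
    (hmax : ∀ N, IsMatchingSet G N → N.ncard ≤ Mopt.ncard)
    {u v : V} (huv : s(u,v) ∈ M) (hu : ∀ w, s(u,w) ∉ Mopt) (hv : ∀ w, s(v,w) ∉ Mopt) :
    False := by
  have hnotin : s(u,v) ∉ Mopt := hu v
  have key : ∀ g ∈ Mopt, ∀ x, x ∈ s(u,v) → x ∉ g := by
    intro g hg x hx hxg
    obtain ⟨w, rfl⟩ := mem_form hxg
    rcases Sym2.mem_iff.mp hx with rfl | rfl
    · exact hu w hg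
    · exact hv w hg
  have hNm : IsMatchingSet G (insert s(u,v) Mopt) := by
    constructor
    · rintro e (rfl | he)
      · exact hM.1 huv
      · exact hMopt.1 he
    · rintro e (rfl | he) f (rfl | hf) hef x hxe
      · exact absurd rfl hef
      · exact key f hf x hxe
      · intro hxf; exact key e he x hxf hxe
      · exact hMopt.2 e he f hf hef x hxe
  have hcard : (insert s(u,v) Mopt).ncard = Mopt.ncard + 1 :=
    Set.ncard_insert_of_notMem hnotin (Set.toFinite _)
  have := hmax _ hNm
  omega

end Aux

/-- for every matching M of G there is a maximum matching M* such that
every (nontrivial) connected component of (V, M ∪ M*) is a single edge of M ∩ M* or an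
M-augmenting path. -/
theorem normal_form_exists {V : Type} [Fintype V] (G : SimpleGraph V)
    (M : Set (Sym2 V)) (hM : IsMatchingSet G M) :
    ∃ Mopt : Set (Sym2 V), IsMaxMatchingSet G Mopt ∧
      ∀ C : (SimpleGraph.fromEdgeSet (M ∪ Mopt)).ConnectedComponent,
        2 ≤ C.supp.ncard →
        IsSingletonComp M Mopt C.supp ∨
        ∃ m p, IsAugPath M Mopt m p ∧ C.supp = pathSupp m p := by
  classical
  have hSfin : {N : Set (Sym2 V) | IsMatchingSet G N}.Finite := Set.toFinite _
  have hSne : {N : Set (Sym2 V) | IsMatchingSet G N}.Nonempty :=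
    ⟨∅, Set.empty_subset _, fun e he => absurd he (Set.notMem_empty e)⟩
  set K : ℕ := (Set.univ : Set (Sym2 V)).ncard + 1 with hK
  have hbound : ∀ T : Set (Sym2 V), T.ncard < K := by
    intro T
    have := Set.ncard_le_ncard (Set.subset_univ T) Set.finite_univ
    omega
  obtain ⟨Mopt, hMoptS, hmax'⟩ :=
    Set.Finite.exists_maximalFor (fun N => N.ncard * K + (M ∩ N).ncard) _ hSfin hSne
  have hMopt : IsMatchingSet G Mopt := hMoptS
  have hfmax : ∀ N, IsMatchingSet G N →
      N.ncard * K + (M ∩ N).ncard ≤ Mopt.ncard * K + (M ∩ Mopt).ncard := by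
    intro N hN
    by_contra hcon
    push_neg at hcon
    have : N.ncard * K + (M ∩ N).ncard ≤ Mopt.ncard * K + (M ∩ Mopt).ncard := hmax' (j := N) hN (le_of_lt hcon)
    omega
  have hmax : ∀ N, IsMatchingSet G N → N.ncard ≤ Mopt.ncard := by
    intro N hN
    by_contra hcon
    push_neg at hcon
    have h1 : (Mopt.ncard + 1) * K ≤ N.ncard * K :=
      mul_le_mul_left (by omega) K
    have h2 : (Mopt.ncard + 1) * K = Mopt.ncard * K + K := by ring
    have h3 := hfmax N hN
    have h4 := hbound (M ∩ Mopt)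
    have h5 : N.ncard * K ≤ Mopt.ncard * K + (M ∩ Mopt).ncard :=
      le_trans (Nat.le_add_right _ _) h3
    have h6 : Mopt.ncard * K + K ≤ Mopt.ncard * K + (M ∩ Mopt).ncard := by
      rw [← h2]; exact le_trans h1 h5
    have h7 : K ≤ (M ∩ Mopt).ncard := le_of_add_le_add_left h6
    exact absurd h7 (not_le.mpr h4)
  have hext : ∀ N, IsMatchingSet G N → N.ncard = Mopt.ncard →
      (M ∩ N).ncard ≤ (M ∩ Mopt).ncard := by
    intro N hN hc
    have h3 := hfmax N hN
    rw [hc] at h3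
    exact le_of_add_le_add_left h3
  refine ⟨Mopt, ⟨hMopt, hmax⟩, ?_⟩
  intro C hC
  by_cases hNC : ∀ x ∈ C.supp, ∀ e ∈ M, e ∈ Mopt → x ∉ e
  · right
    have hC1 : 1 < C.supp.ncard := by omega
    obtain ⟨a, ha, b, hb, hab⟩ := (Set.one_lt_ncard (Set.toFinite _)).mp hC1
    have hreach : (fromEdgeSet (M ∪ Mopt)).Reachable a b := by
      have ha' := ha; have hb' := hb
      rw [SimpleGraph.ConnectedComponent.mem_supp_iff] at ha' hb'
      exact SimpleGraph.ConnectedComponent.exact (ha'.trans hb'.symm)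
    obtain ⟨w⟩ := hreach
    have hadj : ∃ c, (fromEdgeSet (M ∪ Mopt)).Adj a c := by
      cases w with
      | nil => exact absurd rfl hab
      | cons h _ => exact ⟨_, h⟩
    obtain ⟨c, hacAdj⟩ := hadj
    have hacE := ((fromEdgeSet_adj _).mp hacAdj).1
    have hx0 : ∃ x0, x0 ∈ C.supp ∧ ∃ y, s(x0, y) ∈ Mopt := by
      rcases hacE with hMe | hOe
      · by_cases h1 : ∃ y, s(a, y) ∈ Mopt
        · exact ⟨a, ha, h1⟩
        · by_cases h2 : ∃ y, s(c, y) ∈ Mopt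
          · exact ⟨c, supp_adj ha hacAdj, h2⟩
          · push_neg at h1 h2
            exact absurd (augment_contra hM hMopt hmax hMe h1 h2) not_false
      · exact ⟨a, ha, c, hOe⟩
    obtain ⟨x0, hx0C, y0, hy0⟩ := hx0
    by_cases hxM : ∃ w, s(x0, w) ∈ M
    · obtain ⟨v, hvC, hvO, hvM⟩ :=
        walkB hM hMopt hext hNC (Fintype.card V) 0 (fun _ => x0) (by omega)
          (fun i hi j hj _ => by omega) (fun l _ => hx0C)
          (fun l hl => absurd hl (Nat.not_lt_zero l)) hxM ⟨y0, hy0⟩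
      obtain ⟨m, p, hAug, hmem⟩ :=
        walkA hM hMopt hext hNC (Fintype.card V) 0 (fun _ => v) (by omega)
          (fun i hi j hj _ => by omega) (fun l _ => hvC)
          (fun l hl => absurd hl (Nat.not_lt_zero l)) hvM hvO
      exact ⟨m, p, hAug, path_supp_eq hM hMopt hAug hmem⟩
    · push_neg at hxM
      obtain ⟨m, p, hAug, hmem⟩ :=
        walkA hM hMopt hext hNC (Fintype.card V) 0 (fun _ => x0) (by omega)
          (fun i hi j hj _ => by omega) (fun l _ => hx0C)
          (fun l hl => absurd hl (Nat.not_lt_zero l)) hxM ⟨y0, hy0⟩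
      exact ⟨m, p, hAug, path_supp_eq hM hMopt hAug hmem⟩
  · left
    push_neg at hNC
    obtain ⟨x, hxC, e, heM, heO, hxe⟩ := hNC
    obtain ⟨y, rfl⟩ := mem_form hxe
    exact ⟨x, y, matching_ne hM heM, heM, heO, single_supp_eq hM hMopt hxC heM heO⟩


end

end MinGreedy
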